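/- Let n ≥ 1, and let β_0,…,β_n and γ_0,…,γ_{n-1} be elements of 𝔊 such that the operator identity (T_i − 1)∘(Σ_{k=0}^n (β_k·)∘T_j^k) = Σ_{k=0}^{n-1} (γ_k·)∘T_j^k∘L holds on 𝔊 (a formal j-integral relation for 𝒥 = Σ β_k·T_j^k). If the Laplace j-invariants H_0,…,H_{n-1} are all nowhere zero, then β_n vanishes identically. (Equivalently: if β_n is not identically zero, then some H_p with p < n fails to be nowhere-vanishing.) -/

import Mathlib

/-!
Discrete (quad-graph) setting: the space `𝔊` is modelled by `QG = ℤ → ℤ → ℝ`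
(functions `φ(i,j)`), with the shifts `Ti`, `Tj`, their inverses, and the
`k`-fold shifts `TiZ k`, `TjZ k`.  For `g : QG`, pointwise multiplication
`g * φ` models the operator `g·`.
-/

/-- The function space `𝔊` of functions `ℤ² → ℝ`. -/
abbrev QG : Type := ℤ → ℤ → ℝ

namespace QG

noncomputable section

/-- The shift operator `T_i(φ)(i,j) = φ(i+1,j)`. -/
def Ti (φ : QG) : QG := fun i j => φ (i + 1) j

/-- The shift operator `T_j(φ)(i,j) = φ(i,j+1)`. -/
def Tj (φ : QG) : QG := fun i j => φ i (j + 1)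

/-- The `k`-fold shift in `i`. -/
def TiZ (k : ℤ) (φ : QG) : QG := fun i j => φ (i + k) j

/-- The `k`-fold shift in `j`. -/
def TjZ (k : ℤ) (φ : QG) : QG := fun i j => φ i (j + k)

/-- The inverse shift `T_i⁻¹`. -/
def TiInv (φ : QG) : QG := fun i j => φ (i - 1) j

/-- The inverse shift `T_j⁻¹`. -/
def TjInv (φ : QG) : QG := fun i j => φ i (j - 1)

/-- A function that is nowhere zero. -/
def NowhereZero (φ : QG) : Prop := ∀ i j, φ i j ≠ 0

/-- The linearization operator `L = T_i∘T_j − a·T_i − b·T_j − c·`. -/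
def L (a b c : QG) (φ : QG) : QG := Ti (Tj φ) - a * Ti φ - b * Tj φ - c * φ

/-- The pair `(b_k, H_k)` of the Laplace j-transformations:
`b_0 = a`, `H_0 = c + b·T_i⁻¹(a)`,
`b_{k+1} = T_i⁻¹(b_k)·T_j(H_k)/H_k`,
`H_{k+1} = T_j(H_k) − T_j^k(b)·b_{k+1} + T_j^{k+1}(b)·T_i⁻¹(b_{k+1})`. -/
def bH (a b c : QG) : ℕ → QG × QG
  | 0 => (a, c + b * TiInv a)
  | k + 1 =>
      let bk := TiInv (bH a b c k).1 * Tj (bH a b c k).2 / (bH a b c k).2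
      (bk, Tj (bH a b c k).2 - TjZ (k : ℤ) b * bk + TjZ ((k : ℤ) + 1) b * TiInv bk)

/-- The function `b_k`. -/
def bj (a b c : QG) (k : ℕ) : QG := (bH a b c k).1

/-- The Laplace j-invariant `H_k`. -/
def Hj (a b c : QG) (k : ℕ) : QG := (bH a b c k).2

/-- The operator `L_k`: `L_0 = L` and
`L_k = (T_i − T_j^k(b)·)∘(T_j − T_i⁻¹(b_k)·) − H_k·` for `k ≥ 1`. -/
def Lk (a b c : QG) : ℕ → QG → QG
  | 0, φ => L a b c φ
  | k + 1, φ =>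
      Ti (Tj φ - TiInv (bj a b c (k + 1)) * φ)
        - TjZ ((k : ℤ) + 1) b * (Tj φ - TiInv (bj a b c (k + 1)) * φ)
        - Hj a b c (k + 1) * φ

/-- `Bo (k+1)` is the operator `B_k = (T_j − T_i⁻¹(b_k)·)∘B_{k-1}`; `Bo 0 = id` is `B_{-1}`. -/
def Bo (a b c : QG) : ℕ → QG → QG
  | 0, φ => φ
  | k + 1, φ => Tj (Bo a b c k φ) - TiInv (bj a b c k) * Bo a b c k φ

/-- `Bbar k` is the operator `B̄_k`: `B̄_0 = id`, `B̄_k = (T_j − b_k·)∘B̄_{k-1}`. -/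
def Bbar (a b c : QG) : ℕ → QG → QG
  | 0, φ => φ
  | k + 1, φ => Tj (Bbar a b c k φ) - bj a b c (k + 1) * Bbar a b c k φ

/-- `Rchain p` is the composition
`((1/H_0)·)∘(T_i − b·)∘((1/H_1)·)∘(T_i − T_j(b)·)∘···∘((1/H_{p-1})·)∘(T_i − T_j^{p-1}(b)·)`
(the identity for `p = 0`). -/
def Rchain (a b c : QG) : ℕ → QG → QG
  | 0, φ => φ
  | k + 1, φ => Rchain a b c k ((1 / Hj a b c k) * (Ti φ - TjZ (k : ℤ) b * φ))

end

noncomputable section Aux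

lemma Hj0_apply (a b c : QG) (i j : ℤ) : Hj a b c 0 i j = c i j + b i j * a (i-1) j := rfl

lemma bj1_apply (a b c : QG) (i j : ℤ) :
    bj a b c 1 i j = a (i-1) j * Hj a b c 0 i (j+1) / Hj a b c 0 i j := rfl

lemma bj_succ' (a b c : QG) (k : ℕ) :
    bj a b c (k+1) = TiInv (bj a b c k) * Tj (Hj a b c k) / Hj a b c k := rfl

lemma Hj_succ' (a b c : QG) (k : ℕ) :
    Hj a b c (k+1) = Tj (Hj a b c k) - TjZ (k : ℤ) b * bj a b c (k+1)
      + TjZ ((k : ℤ) + 1) b * TiInv (bj a b c (k+1)) := rfl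

lemma Ti_apply (φ : QG) (i j : ℤ) : Ti φ i j = φ (i+1) j := rfl
lemma TjZ_apply (k : ℤ) (φ : QG) (i j : ℤ) : TjZ k φ i j = φ i (j+k) := rfl
lemma L_apply (a b c φ : QG) (i j : ℤ) :
    L a b c φ i j = φ (i+1) (j+1) - a i j * φ (i+1) j - b i j * φ i (j+1) - c i j * φ i j := rfl

lemma TjZ_Tj (b : QG) (k : ℤ) : TjZ k (Tj b) = TjZ (k+1) b := by
  funext i j
  show b i (j + k + 1) = b i (j + (k+1))
  ring_nf

/-- The Laplace-transformed coefficients have shifted invariants. -/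
lemma shift_bjHj (a b c : QG) (p : ℕ) :
    bj (bj a b c 1) (Tj b) (Tj (Hj a b c 0) - b * bj a b c 1) p = bj a b c (p+1) ∧
    Hj (bj a b c 1) (Tj b) (Tj (Hj a b c 0) - b * bj a b c 1) p = Hj a b c (p+1) := by
  induction p with
  | zero =>
    refine ⟨rfl, ?_⟩
    show Tj (Hj a b c 0) - b * bj a b c 1 + Tj b * TiInv (bj a b c 1) = Hj a b c 1
    rw [Hj_succ']
    funext i j
    show _ = Hj a b c 0 i (j+1) - b i (j + (0:ℤ)) * bj a b c 1 i j
      + b i (j + ((0:ℤ)+1)) * bj a b c 1 (i-1) j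
    simp only [Pi.add_apply, Pi.sub_apply, Pi.mul_apply]
    norm_num
    rfl
  | succ p ih =>
    obtain ⟨ihb, ihH⟩ := ih
    have ihb' : bj (bj a b c 1) (Tj b) (Tj (Hj a b c 0) - b * bj a b c 1) (p+1)
        = bj a b c (p+2) := by
      rw [bj_succ' (bj a b c 1) (Tj b) _ p, ihb, ihH, ← bj_succ' a b c (p+1)]
    refine ⟨ihb', ?_⟩
    rw [Hj_succ' (bj a b c 1) (Tj b) _ p, ihb', ihH, TjZ_Tj, TjZ_Tj,
      Hj_succ' a b c (p+1)]
    push_cast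
    ring_nf

/-- The adjoint (multiplier) system associated with an exact `M∘L`. -/
def Sys (a b c : QG) (γ : ℕ → QG) : Prop :=
  (∀ i j : ℤ, c (i+1) j * γ 0 (i+1) j = -(a i j * γ 0 i j)) ∧
  (∀ (k : ℕ) (i j : ℤ),
    b (i+1) (j+(k:ℤ)) * γ k (i+1) j + c (i+1) (j+(k:ℤ)+1) * γ (k+1) (i+1) j
      = γ k i j - a i (j+(k:ℤ)+1) * γ (k+1) i j)

/-- Key lemma: a multiplier system of order `< m` with `H_0,…,H_{m-1}` nowhere zero
is trivial. -/
lemma key (m : ℕ) : ∀ (a b c : QG) (γ : ℕ → QG),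
    Sys a b c γ → (∀ k, m ≤ k → γ k = 0) →
    (∀ p, p < m → NowhereZero (Hj a b c p)) → ∀ k, γ k = 0 := by
  induction m with
  | zero => exact fun a b c γ _ hv _ k => hv k (Nat.zero_le k)
  | succ m ih =>
    intro a b c γ hS hv hH
    have hH0 : ∀ i j, Hj a b c 0 i j ≠ 0 := hH 0 (Nat.succ_pos m)
    set γh : ℕ → QG := fun k i j =>
      (γ k (i-1) j - γ k i j * b i (j+(k:ℤ))) / Hj a b c 0 i (j+(k:ℤ)+1) with hγh
    -- The transformed system
    have hS' : Sys (bj a b c 1) (Tj b) (Tj (Hj a b c 0) - b * bj a b c 1) γh := by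
      constructor
      · intro i j
        have h1 := hS.1 i j
        have h2 := hS.1 (i-1) j
        rw [sub_add_cancel] at h2
        have n1 := hH0 (i+1) j
        have n2 := hH0 (i+1) (j+1)
        have n3 := hH0 i j
        have n4 := hH0 i (j+1)
        have A1 : (Tj (Hj a b c 0) - b * bj a b c 1) (i+1) j
            = Hj a b c 0 (i+1) (j+1)
              - b (i+1) j * (a i j * Hj a b c 0 (i+1) (j+1) / Hj a b c 0 (i+1) j) := by
          simp only [Pi.sub_apply, Pi.mul_apply, bj1_apply]
          norm_num [Tj]
        have B1 : bj a b c 1 i j = a (i-1) j * Hj a b c 0 i (j+1) / Hj a b c 0 i j :=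
          bj1_apply a b c i j
        have G1 : γh 0 (i+1) j
            = (γ 0 i j - γ 0 (i+1) j * b (i+1) j) / Hj a b c 0 (i+1) (j+1) := by
          show (γ 0 ((i+1)-1) j - γ 0 (i+1) j * b (i+1) (j+((0:ℕ):ℤ)))
              / Hj a b c 0 (i+1) (j+((0:ℕ):ℤ)+1) = _
          norm_num
        have G2 : γh 0 i j
            = (γ 0 (i-1) j - γ 0 i j * b i j) / Hj a b c 0 i (j+1) := by
          show (γ 0 (i-1) j - γ 0 i j * b i (j+((0:ℕ):ℤ)))
              / Hj a b c 0 i (j+((0:ℕ):ℤ)+1) = _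
          norm_num
        rw [A1, B1, G1, G2]
        have e1 : Hj a b c 0 (i+1) j = c (i+1) j + b (i+1) j * a i j := by
          rw [Hj0_apply]; norm_num
        have e2 : Hj a b c 0 i j = c i j + b i j * a (i-1) j := Hj0_apply a b c i j
        rw [e1, e2]
        rw [e1] at n1
        rw [e2] at n3
        have n1' := n1
        have n3' := n3
        rw [mul_comm] at n1' n3'
        field_simp
        linear_combination
          (-(b (i+1) j * (c i j + a (i-1) j * b i j))) * h1
            + (c (i+1) j + b (i+1) j * a i j) * h2
      · intro k i j
        have h1 := hS.2 k i j
        have h2 := hS.2 k (i-1) j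
        rw [sub_add_cancel] at h2
        have n1 := hH0 (i+1) (j+(k:ℤ)+1)
        have n2 := hH0 (i+1) (j+(k:ℤ)+1+1)
        have n3 := hH0 i (j+(k:ℤ)+1)
        have n4 := hH0 i (j+(k:ℤ)+1+1)
        have e1 : Hj a b c 0 (i+1) (j+(k:ℤ)+1)
            = c (i+1) (j+(k:ℤ)+1) + b (i+1) (j+(k:ℤ)+1) * a i (j+(k:ℤ)+1) := by
          rw [Hj0_apply]; norm_num
        have e2 : Hj a b c 0 i (j+(k:ℤ)+1)
            = c i (j+(k:ℤ)+1) + b i (j+(k:ℤ)+1) * a (i-1) (j+(k:ℤ)+1) :=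
          Hj0_apply a b c i _
        simp only [hγh, Pi.sub_apply, Pi.mul_apply, bj1_apply, Tj]
        push_cast
        simp only [← add_assoc]
        norm_num
        rw [e1, e2]
        rw [e1] at n1
        rw [e2] at n3
        have n1' := n1
        have n3' := n3
        rw [mul_comm] at n1' n3'
        field_simp
        linear_combination
          (-(b (i+1) (j+(k:ℤ)+1) * (c i (j+(k:ℤ)+1) + b i (j+(k:ℤ)+1) * a (i-1) (j+(k:ℤ)+1)))) * h1
            + (c (i+1) (j+(k:ℤ)+1) + b (i+1) (j+(k:ℤ)+1) * a i (j+(k:ℤ)+1)) * h2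
    have hv' : ∀ k, m ≤ k → γh k = 0 := by
      intro k hk
      funext i j
      have h1 := hS.2 k (i-1) j
      rw [hv (k+1) (by omega)] at h1
      simp only [sub_add_cancel, Pi.zero_apply, mul_zero, add_zero, sub_zero] at h1
      show (γ k (i-1) j - γ k i j * b i (j+(k:ℤ))) / _ = 0
      rw [← h1]
      simp [mul_comm]
    have hH' : ∀ p, p < m →
        NowhereZero (Hj (bj a b c 1) (Tj b) (Tj (Hj a b c 0) - b * bj a b c 1) p) := by
      intro p hp
      rw [(shift_bjHj a b c p).2]
      exact hH (p+1) (by omega)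
    have hz := ih _ _ _ γh hS' hv' hH'
    -- the key consequence
    have rel5 : ∀ (k : ℕ) (i j : ℤ), γ k (i-1) j = γ k i j * b i (j+(k:ℤ)) := by
      intro k i j
      have h := congrFun (congrFun (hz k) i) j
      have h2 : (γ k (i-1) j - γ k i j * b i (j+(k:ℤ))) / Hj a b c 0 i (j+(k:ℤ)+1) = 0 := h
      rcases div_eq_zero_iff.mp h2 with h3 | h3
      · linarith [sub_eq_zero.mp h3]
      · exact absurd h3 (hH0 i _)
    intro k
    funext i j
    cases k with
    | zero =>
      have h1 := hS.1 (i-1) j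
      rw [sub_add_cancel] at h1
      have h2 := rel5 0 i j
      have h3 : (c i j + b i j * a (i-1) j) * γ 0 i j = 0 := by
        push_cast at h2
        rw [add_zero] at h2
        linear_combination h1 - a (i-1) j * h2
      have h4 := hH0 i j
      rw [Hj0_apply] at h4
      exact (mul_eq_zero.mp h3).resolve_left h4
    | succ k =>
      have h1 := hS.2 k (i-1) j
      rw [sub_add_cancel] at h1
      have h2 := rel5 k i j
      have h3 := rel5 (k+1) i j
      push_cast at h3
      rw [← add_assoc] at h3
      have h4 : (c i (j+(k:ℤ)+1) + b i (j+(k:ℤ)+1) * a (i-1) (j+(k:ℤ)+1)) * γ (k+1) i j = 0 := by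
        linear_combination h1 + h2 - a (i-1) (j+(k:ℤ)+1) * h3
      have h5 := hH0 i (j+(k:ℤ)+1)
      rw [Hj0_apply] at h5
      exact (mul_eq_zero.mp h4).resolve_left h5

end Aux
/-- Let `n ≥ 1` and `β_0, …, β_n, γ_0, …, γ_{n-1} ∈ 𝔊` satisfy the
formal j-integral relation `(T_i − 1)∘(Σ_{k=0}^n (β_k·)∘T_j^k) = Σ_{k=0}^{n-1} (γ_k·)∘T_j^k∘L`
on `𝔊`.  If the Laplace j-invariants `H_0, …, H_{n-1}` are all nowhere zero, then
`β_n` vanishes identically. -/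
theorem statement12 (a b c : QG) (n : ℕ) (hn : 1 ≤ n) (β γ : ℕ → QG)
    (hJ : ∀ φ : QG,
      Ti (∑ k ∈ Finset.range (n + 1), β k * TjZ (k : ℤ) φ)
          - ∑ k ∈ Finset.range (n + 1), β k * TjZ (k : ℤ) φ
        = ∑ k ∈ Finset.range n, γ k * TjZ (k : ℤ) (L a b c φ))
    (hH : ∀ m, m < n → NowhereZero (Hj a b c m)) :
    β n = 0 := by
  obtain ⟨s, rfl⟩ : ∃ s, n = s + 1 := ⟨n - 1, by omega⟩
  set δ : ℤ → ℤ → QG := fun P Q p q => if p = P ∧ q = Q then (1:ℝ) else 0 with hδ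
  have E : ∀ P Q i j : ℤ,
      (∑ k ∈ Finset.range (s+1+1), β k (i+1) j * δ P Q (i+1) (j+(k:ℤ)))
        - ∑ k ∈ Finset.range (s+1+1), β k i j * δ P Q i (j+(k:ℤ))
      = ∑ k ∈ Finset.range (s+1), γ k i j *
          (δ P Q (i+1) (j+(k:ℤ)+1) - a i (j+(k:ℤ)) * δ P Q (i+1) (j+(k:ℤ))
            - b i (j+(k:ℤ)) * δ P Q i (j+(k:ℤ)+1) - c i (j+(k:ℤ)) * δ P Q i (j+(k:ℤ))) := by
    intro P Q i j
    have h := congrFun (congrFun (hJ (δ P Q)) i) j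
    simp only [Pi.sub_apply, Finset.sum_apply, Pi.mul_apply, Ti_apply, TjZ_apply,
      L_apply] at h
    exact h
  have X20 : ∀ i j : ℤ, β 0 (i+1) j = -(a i j * γ 0 i j) := by
    intro i j
    have h := E (i+1) j i j
    have hne : (i:ℤ) ≠ i + 1 := by omega
    have hc : ∀ k : ℕ, j + (k:ℤ) + 1 ≠ j := by intro k; omega
    simp only [hδ] at h
    simp [hne, hc, mul_ite, Finset.sum_ite_eq'] at h
    rw [h]; ring
  have X10 : ∀ i j : ℤ, β 0 i j = c i j * γ 0 i j := by
    intro i j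
    have h := E i j i j
    have hne : (i:ℤ) + 1 ≠ i := by omega
    have hc : ∀ k : ℕ, j + (k:ℤ) + 1 ≠ j := by intro k; omega
    simp only [hδ] at h
    simp [hne, hc, mul_ite, Finset.sum_ite_eq'] at h
    rw [h]; ring
  have X2mid : ∀ t : ℕ, t < s → ∀ i j : ℤ,
      β (t+1) (i+1) j = γ t i j - a i (j+(t:ℤ)+1) * γ (t+1) i j := by
    intro t ht i j
    have h := E (i+1) (j+(t:ℤ)+1) i j
    have hne : (i:ℤ) ≠ i + 1 := by omega
    have hc1 : ∀ k : ℕ, (j + (k:ℤ) = j + (t:ℤ) + 1) ↔ k = t+1 := by intro k; omega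
    have hc2 : ∀ k : ℕ, (j + (k:ℤ) + 1 = j + (t:ℤ) + 1) ↔ k = t := by intro k; omega
    have hm1 : t + 1 < s + 1 + 1 := by omega
    have hm2 : t < s + 1 := by omega
    have hm3 : t + 1 < s + 1 := by omega
    simp only [hδ] at h
    simp [hne, hc1, hc2, hm1, hm2, hm3, mul_ite, mul_sub, mul_neg,
      Finset.sum_sub_distrib, Finset.sum_ite_eq'] at h
    simp only [Nat.cast_add, Nat.cast_one, ← add_assoc] at h
    linear_combination h
  have X2top : ∀ i j : ℤ, β (s+1) (i+1) j = γ s i j := by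
    intro i j
    have h := E (i+1) (j+(s:ℤ)+1) i j
    have hne : (i:ℤ) ≠ i + 1 := by omega
    have hc1 : ∀ k : ℕ, (j + (k:ℤ) = j + (s:ℤ) + 1) ↔ k = s+1 := by intro k; omega
    have hc2 : ∀ k : ℕ, (j + (k:ℤ) + 1 = j + (s:ℤ) + 1) ↔ k = s := by intro k; omega
    have hm1 : s + 1 < s + 1 + 1 := by omega
    have hm2 : s < s + 1 := by omega
    simp only [hδ] at h
    simp [hne, hc1, hc2, hm1, hm2, mul_ite, mul_sub, mul_neg,
      Finset.sum_sub_distrib, Finset.sum_ite_eq'] at h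
    linear_combination h
  have X1mid : ∀ t : ℕ, t < s → ∀ i j : ℤ,
      β (t+1) i j = b i (j+(t:ℤ)) * γ t i j + c i (j+(t:ℤ)+1) * γ (t+1) i j := by
    intro t ht i j
    have h := E i (j+(t:ℤ)+1) i j
    have hne : (i:ℤ) + 1 ≠ i := by omega
    have hc1 : ∀ k : ℕ, (j + (k:ℤ) = j + (t:ℤ) + 1) ↔ k = t+1 := by intro k; omega
    have hc2 : ∀ k : ℕ, (j + (k:ℤ) + 1 = j + (t:ℤ) + 1) ↔ k = t := by intro k; omega
    have hm1 : t + 1 < s + 1 + 1 := by omega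
    have hm2 : t < s + 1 := by omega
    have hm3 : t + 1 < s + 1 := by omega
    simp only [hδ] at h
    simp [hne, hc1, hc2, hm1, hm2, hm3, mul_ite, mul_sub, mul_neg,
      Finset.sum_sub_distrib, Finset.sum_ite_eq'] at h
    simp only [Nat.cast_add, Nat.cast_one, ← add_assoc] at h
    linear_combination -h
  have X1top : ∀ i j : ℤ, β (s+1) i j = b i (j+(s:ℤ)) * γ s i j := by
    intro i j
    have h := E i (j+(s:ℤ)+1) i j
    have hne : (i:ℤ) + 1 ≠ i := by omega
    have hc1 : ∀ k : ℕ, (j + (k:ℤ) = j + (s:ℤ) + 1) ↔ k = s+1 := by intro k; omega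
    have hc2 : ∀ k : ℕ, (j + (k:ℤ) + 1 = j + (s:ℤ) + 1) ↔ k = s := by intro k; omega
    have hm1 : s + 1 < s + 1 + 1 := by omega
    have hm2 : s < s + 1 := by omega
    simp only [hδ] at h
    simp [hne, hc1, hc2, hm1, hm2, mul_ite, mul_sub, mul_neg,
      Finset.sum_sub_distrib, Finset.sum_ite_eq'] at h
    linear_combination h
  set γt : ℕ → QG := fun k => if k < s + 1 then γ k else 0 with hγt
  have hSys : Sys a b c γt := by
    constructor
    · intro i j
      have e0 : γt 0 = γ 0 := if_pos (by omega)
      rw [e0, ← X10 (i+1) j]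
      exact X20 i j
    · intro k i j
      rcases lt_trichotomy k s with hk | hk | hk
      · have ek : γt k = γ k := if_pos (by omega)
        have ek1 : γt (k+1) = γ (k+1) := if_pos (by omega)
        rw [ek, ek1, ← X1mid k hk (i+1) j]
        exact X2mid k hk i j
      · subst hk
        have ek : γt k = γ k := if_pos (by omega)
        have ek1 : γt (k+1) = 0 := if_neg (by omega)
        rw [ek, ek1]
        simp only [Pi.zero_apply, mul_zero, add_zero, sub_zero]
        rw [← X1top (i+1) j]
        exact X2top i j
      · have ek : γt k = 0 := if_neg (by omega)
        have ek1 : γt (k+1) = 0 := if_neg (by omega)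
        rw [ek, ek1]
        simp
  have hvan : ∀ k, s + 1 ≤ k → γt k = 0 := fun k hk => if_neg (by omega)
  have hz := key (s+1) a b c γt hSys hvan hH
  have hγs : γ s = 0 := by
    have h := hz s
    rwa [show γt s = γ s from if_pos (by omega)] at h
  funext i j
  rw [Pi.zero_apply, X1top i j, hγs]
  simp

end QG
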